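/- Let U > 0, V₀, V₁ > 0 with V₁ ≥ V₀, K ≥ 1 an integer, Λ(x,λ) = erf((x-0.5-λ)/√(2λ)). Define h(ξ_R) = (1/4)[2 - (1+Λ(ξ_R,U))Λ(ξ_FC,V₀) + (-1+Λ(ξ_R,U))Λ(ξ_FC,V₁)] for fixed ξ_FC with ξ_FC + V₀ > 0.5 and ξ_FC + V₁ > 0.5. Then ξ_R ↦ h(ξ_R)^K is convex on the set {ξ_R : ξ_R ≥ U + 0.5}. -/

import Mathlib

/-- The Gauss error function `erf z = (2/√π) ∫_0^z e^{-t²} dt`. -/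
noncomputable def erf (z : ℝ) : ℝ := (2 / Real.sqrt Real.pi) * ∫ t in (0:ℝ)..z, Real.exp (-t ^ 2)

/-- The Gaussian (continuity-corrected) approximation of the Poisson CDF. -/
noncomputable def Lam (x lam : ℝ) : ℝ := erf ((x - 0.5 - lam) / Real.sqrt (2 * lam))

open Set MeasureTheory

lemma erf_hasDerivAt (z : ℝ) :
    HasDerivAt erf ((2 / Real.sqrt Real.pi) * Real.exp (-z ^ 2)) z := by
  have hc : Continuous fun t : ℝ => Real.exp (-t ^ 2) := by continuity
  have h := intervalIntegral.integral_hasDerivAt_right (hc.intervalIntegrable 0 z)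
    (hc.stronglyMeasurableAtFilter _ _) hc.continuousAt
  exact h.const_mul _

lemma erf_differentiable : Differentiable ℝ erf :=
  fun z => (erf_hasDerivAt z).differentiableAt

lemma erf_deriv (z : ℝ) : deriv erf z = (2 / Real.sqrt Real.pi) * Real.exp (-z ^ 2) :=
  (erf_hasDerivAt z).deriv

lemma erf_monotone : Monotone erf := by
  apply monotone_of_deriv_nonneg erf_differentiable
  intro x
  rw [erf_deriv]
  positivity

lemma erf_zero : erf 0 = 0 := by simp [erf]

lemma erf_le_one (z : ℝ) : erf z ≤ 1 := by
  rcases le_or_gt z 0 with h | h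
  · calc erf z ≤ erf 0 := erf_monotone h
    _ ≤ 1 := by rw [erf_zero]; norm_num
  · have hc : Continuous fun t : ℝ => Real.exp (-t ^ 2) := by continuity
    have hint : IntegrableOn (fun t : ℝ => Real.exp (-t ^ 2)) (Ioi 0) := by
      have := integrable_exp_neg_mul_sq (b := 1) one_pos
      simpa using this.integrableOn
    have hI : (∫ t in (0:ℝ)..z, Real.exp (-t ^ 2)) ≤ ∫ t in Ioi (0:ℝ), Real.exp (-t ^ 2) := by
      rw [intervalIntegral.integral_of_le h.le]
      apply setIntegral_mono_set hint
      · filter_upwards with t using (Real.exp_pos _).le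
      · exact HasSubset.Subset.eventuallyLE Ioc_subset_Ioi_self
    have hval : (∫ t in Ioi (0:ℝ), Real.exp (-t ^ 2)) = Real.sqrt Real.pi / 2 := by
      have := integral_gaussian_Ioi 1
      simpa using this
    have hπ : 0 < Real.sqrt Real.pi := Real.sqrt_pos.mpr Real.pi_pos
    unfold erf
    rw [hval] at hI
    calc (2 / Real.sqrt Real.pi) * ∫ t in (0:ℝ)..z, Real.exp (-t ^ 2)
        ≤ (2 / Real.sqrt Real.pi) * (Real.sqrt Real.pi / 2) := by
          apply mul_le_mul_of_nonneg_left hI (by positivity)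
      _ = 1 := by field_simp

lemma erf_neg (z : ℝ) : erf (-z) = -erf z := by
  unfold erf
  have h1 : (∫ t in (0:ℝ)..(-z), Real.exp (-t ^ 2)) = -∫ t in (-z)..(0:ℝ), Real.exp (-t ^ 2) :=
    (intervalIntegral.integral_symm _ _)
  have h2 : (∫ t in (-z)..(0:ℝ), Real.exp (-t ^ 2)) = ∫ t in (0:ℝ)..z, Real.exp (-t ^ 2) := by
    have := intervalIntegral.integral_comp_neg (a := (0:ℝ)) (b := z)
      (fun t => Real.exp (-t ^ 2))
    simpa using this.symm
  rw [h1, h2]; ring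

lemma neg_one_le_erf (z : ℝ) : -1 ≤ erf z := by
  have := erf_le_one (-z)
  rw [erf_neg] at this
  linarith

lemma erf_concaveOn : ConcaveOn ℝ (Ici (0:ℝ)) erf := by
  apply AntitoneOn.concaveOn_of_deriv (convex_Ici 0)
    erf_differentiable.continuous.continuousOn
    erf_differentiable.differentiableOn
  intro x hx y hy hxy
  rw [interior_Ici] at hx hy
  rw [erf_deriv, erf_deriv]
  have hπ : 0 < Real.sqrt Real.pi := Real.sqrt_pos.mpr Real.pi_pos
  apply mul_le_mul_of_nonneg_left _ (by positivity)
  apply Real.exp_le_exp.mpr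
  nlinarith [(mem_Ioi.mp hx).le, (mem_Ioi.mp hy).le]

lemma lam_concaveOn (U : ℝ) (hU : 0 < U) :
    ConcaveOn ℝ (Ici (U + 0.5)) (fun ξ => Lam ξ U) := by
  have hc : 0 < Real.sqrt (2 * U) := Real.sqrt_pos.mpr (by linarith)
  constructor
  · exact convex_Ici _
  · intro x hx y hy a b ha hb hab
    simp only [smul_eq_mul, Lam]
    have hargx : (0:ℝ) ≤ (x - 0.5 - U) / Real.sqrt (2 * U) := by
      apply div_nonneg _ hc.le
      have := mem_Ici.mp hx; norm_num at this ⊢; linarith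
    have hargy : (0:ℝ) ≤ (y - 0.5 - U) / Real.sqrt (2 * U) := by
      apply div_nonneg _ hc.le
      have := mem_Ici.mp hy; norm_num at this ⊢; linarith
    have harg : (a * x + b * y - 0.5 - U) / Real.sqrt (2 * U)
        = a * ((x - 0.5 - U) / Real.sqrt (2 * U)) + b * ((y - 0.5 - U) / Real.sqrt (2 * U)) := by
      field_simp
      linear_combination (1/2 + U) * hab
    rw [harg]
    exact erf_concaveOn.2 hargx hargy ha hb hab

theorem Pfa_tilde_pow_convex (U V₀ V₁ ξFC : ℝ) (hU : 0 < U) (hV₀ : 0 < V₀) (hV₁ : 0 < V₁)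
    (hV : V₀ ≤ V₁) (h₀ : ξFC + V₀ > 0.5) (h₁ : ξFC + V₁ > 0.5) (K : ℕ) (hK : 1 ≤ K) :
    ConvexOn ℝ (Set.Ici (U + 0.5))
      (fun ξR : ℝ => ((1 / 4) * (2 - (1 + Lam ξR U) * Lam ξFC V₀ +
        (-1 + Lam ξR U) * Lam ξFC V₁)) ^ K) := by
  set a := Lam ξFC V₀ with ha_def
  set b := Lam ξFC V₁ with hb_def
  -- basic bounds
  have ha1 : a ≤ 1 := erf_le_one _
  have ha1' : -1 ≤ a := neg_one_le_erf _
  have hb1 : b ≤ 1 := erf_le_one _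
  have hb1' : -1 ≤ b := neg_one_le_erf _
  -- b ≤ a
  have hba : b ≤ a := by
    rw [ha_def, hb_def]
    unfold Lam
    apply erf_monotone
    set s₀ := Real.sqrt (2 * V₀) with hs₀
    set s₁ := Real.sqrt (2 * V₁) with hs₁
    have hs₀pos : 0 < s₀ := Real.sqrt_pos.mpr (by linarith)
    have hs₁pos : 0 < s₁ := Real.sqrt_pos.mpr (by linarith)
    have hs₀sq : s₀ ^ 2 = 2 * V₀ := Real.sq_sqrt (by linarith)
    have hs₁sq : s₁ ^ 2 = 2 * V₁ := Real.sq_sqrt (by linarith)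
    have hs01 : s₀ ≤ s₁ := Real.sqrt_le_sqrt (by linarith)
    rw [div_le_div_iff₀ hs₁pos hs₀pos]
    have hd : (0:ℝ) < ξFC - 0.5 + V₀ := by norm_num at h₀ ⊢; linarith
    have hkey : 0 ≤ (s₁ - s₀) * ((ξFC - 0.5) + s₀ * s₁ / 2) := by
      apply mul_nonneg (by linarith)
      nlinarith [mul_le_mul_of_nonneg_left hs01 hs₀pos.le]
    nlinarith [hkey, hs₀sq, hs₁sq]
  -- the inner function is convex
  have hconv : ConvexOn ℝ (Set.Ici (U + 0.5))
      (fun ξR : ℝ => (1 / 4) * (2 - (1 + Lam ξR U) * a + (-1 + Lam ξR U) * b)) := by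
    have hfun : (fun ξR : ℝ => (1 / 4) * (2 - (1 + Lam ξR U) * a + (-1 + Lam ξR U) * b))
        = fun ξR : ℝ => ((a - b) / 4) • (-Lam ξR U) + (2 - a - b) / 4 := by
      funext ξ; simp [smul_eq_mul]; ring
    rw [hfun]
    have h1 : ConvexOn ℝ (Set.Ici (U + 0.5)) (fun ξ : ℝ => -Lam ξ U) :=
      (lam_concaveOn U hU).neg
    have h2 := (h1.smul (c := (a - b) / 4) (by linarith)).add_const ((2 - a - b) / 4)
    exact h2
  -- nonnegativity of the inner function
  have hnn : ∀ ⦃x⦄, x ∈ Set.Ici (U + 0.5) →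
      0 ≤ (1 / 4) * (2 - (1 + Lam x U) * a + (-1 + Lam x U) * b) := by
    intro x _
    have hL1 : Lam x U ≤ 1 := erf_le_one _
    have hL1' : -1 ≤ Lam x U := neg_one_le_erf _
    nlinarith [mul_nonneg (sub_nonneg.2 hL1) (sub_nonneg.2 hba)]
  have := hconv.pow hnn K
  simpa [Pi.pow_def] using this
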